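/- Let θ ≥ 1 and let ψ(t) = 1 − (1 − e^{−t})^{1/θ} be the Joe generator. Then 1 − 4 ∫_0^∞ t (ψ′(t))^2 dt = 1 − 4 ∑_{k=1}^∞ 1/(k (θk + 2)(θ(k−1) + 2)); that is, Kendall's tau of the Joe copula with parameter θ equals 1 − 4 ∑_{k=1}^∞ 1/(k(θk+2)(θ(k−1)+2)), the series being convergent. -/

import Mathlib

open Real MeasureTheory Set

-- beta-like integral
lemma lemA {b : ℝ} (hb : -1 < b) :
    ∫ u in Ioo (0:ℝ) 1, u ^ b * (1 - u) = 1/(b+1) - 1/(b+2) := by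
  have h1 : IntegrableOn (fun u : ℝ => u ^ b) (Ioo 0 1) := by
    have := (intervalIntegral.intervalIntegrable_rpow' (a := (0:ℝ)) (b := 1) hb)
    rw [intervalIntegrable_iff_integrableOn_Ioc_of_le (by norm_num)] at this
    exact this.mono_set Ioo_subset_Ioc_self
  have h2 : IntegrableOn (fun u : ℝ => u ^ (b+1)) (Ioo 0 1) := by
    have := (intervalIntegral.intervalIntegrable_rpow' (a := (0:ℝ)) (b := 1) (by linarith : (-1:ℝ) < b+1))
    rw [intervalIntegrable_iff_integrableOn_Ioc_of_le (by norm_num)] at this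
    exact this.mono_set Ioo_subset_Ioc_self
  have key : ∫ u in Ioo (0:ℝ) 1, u ^ b * (1 - u) = (∫ u in Ioo (0:ℝ) 1, u ^ b) - ∫ u in Ioo (0:ℝ) 1, u ^ (b+1) := by
    rw [← integral_sub h1 h2]
    apply setIntegral_congr_fun measurableSet_Ioo
    intro u hu
    have hu0 : (0:ℝ) < u := hu.1
    simp only
    rw [Real.rpow_add hu0, Real.rpow_one]
    ring
  have e1 : ∫ u in Ioo (0:ℝ) 1, u ^ b = 1/(b+1) := by
    rw [← integral_Ioc_eq_integral_Ioo, ← intervalIntegral.integral_of_le (by norm_num : (0:ℝ) ≤ 1)]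
    rw [integral_rpow (Or.inl hb)]
    rw [Real.one_rpow, Real.zero_rpow (by linarith : b + 1 ≠ 0)]
    ring
  have e2 : ∫ u in Ioo (0:ℝ) 1, u ^ (b+1) = 1/(b+2) := by
    rw [← integral_Ioc_eq_integral_Ioo, ← intervalIntegral.integral_of_le (by norm_num : (0:ℝ) ≤ 1)]
    rw [integral_rpow (Or.inl (by linarith : (-1:ℝ) < b+1))]
    rw [Real.one_rpow, Real.zero_rpow (by linarith : b + 1 + 1 ≠ 0)]
    norm_num
    ring_nf
  rw [key, e1, e2]

-- substitution
lemma lemB (g : ℝ → ℝ) :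
    ∫ u in Ioo (0:ℝ) 1, g u = ∫ t in Ioi (0:ℝ), Real.exp (-t) * g (1 - Real.exp (-t)) := by
  have himg : (fun t : ℝ => 1 - Real.exp (-t)) '' (Ioi 0) = Ioo 0 1 := by
    ext u
    constructor
    · rintro ⟨t, ht, rfl⟩
      have h1 : Real.exp (-t) < 1 := Real.exp_lt_one_iff.mpr (by simpa using ht)
      have h2 : 0 < Real.exp (-t) := Real.exp_pos _
      have ht' : (0:ℝ) < t := ht
      exact ⟨by simp only; linarith, by simp only; linarith⟩
    · rintro ⟨hu0, hu1⟩
      refine ⟨-Real.log (1 - u), ?_, ?_⟩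
      · simp only [mem_Ioi]
        have := Real.log_neg (by linarith : (0:ℝ) < 1 - u) (by linarith : (1:ℝ) - u < 1)
        linarith
      · show 1 - Real.exp (-(-Real.log (1-u))) = u
        rw [neg_neg, Real.exp_log (by linarith)]
        ring
  have hderiv : ∀ t ∈ Ioi (0:ℝ), HasDerivWithinAt (fun t : ℝ => 1 - Real.exp (-t)) (Real.exp (-t)) (Ioi 0) t := by
    intro t _
    have : HasDerivAt (fun t : ℝ => 1 - Real.exp (-t)) (Real.exp (-t)) t := by
      have h := ((hasDerivAt_neg t).exp).const_sub 1
      simpa using h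
    exact this.hasDerivWithinAt
  have hinj : InjOn (fun t : ℝ => 1 - Real.exp (-t)) (Ioi 0) := by
    have : StrictMonoOn (fun t : ℝ => 1 - Real.exp (-t)) (Ioi 0) := by
      intro a _ b _ hab
      simp only [sub_lt_sub_iff_left]
      exact Real.exp_lt_exp.mpr (by linarith)
    exact this.injOn
  rw [← himg, integral_image_eq_integral_abs_deriv_smul measurableSet_Ioi hderiv hinj]
  apply setIntegral_congr_fun measurableSet_Ioi
  intro t _
  simp [abs_of_pos (Real.exp_pos (-t)), smul_eq_mul]

noncomputable def Fj (θ : ℝ) (k : ℕ) (u : ℝ) : ℝ :=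
  u ^ ((k:ℝ) + 2/θ - 1) * (1 - u) / ((k:ℝ)+1)

lemma lemC (θ : ℝ) (hθ : 1 ≤ θ) {t : ℝ} (ht : 0 < t) :
    deriv (fun s => 1 - (1 - Real.exp (-s)) ^ (1/θ)) t
      = -(1/θ * (1 - Real.exp (-t)) ^ (1/θ - 1) * Real.exp (-t)) := by
  have hx : (0:ℝ) < 1 - Real.exp (-t) := by
    have : Real.exp (-t) < 1 := Real.exp_lt_one_iff.mpr (by linarith)
    linarith
  have h1 : HasDerivAt (fun s : ℝ => 1 - Real.exp (-s)) (Real.exp (-t)) t := by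
    simpa using ((hasDerivAt_neg t).exp).const_sub 1
  have h2 := h1.rpow_const (p := 1/θ) (Or.inl (ne_of_gt hx))
  have h3 := h2.const_sub 1
  rw [h3.deriv]
  ring

lemma lemE (θ : ℝ) (hθ : 1 ≤ θ) (k : ℕ) :
    ∫ u in Ioo (0:ℝ) 1, Fj θ k u
      = 1 / (((k:ℝ)+1) * ((k:ℝ) + 2/θ) * ((k:ℝ) + 1 + 2/θ)) := by
  have hθ0 : (0:ℝ) < θ := by linarith
  have hc : (0:ℝ) < 2/θ := by positivity
  have hb : (-1:ℝ) < (k:ℝ) + 2/θ - 1 := by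
    have : (0:ℝ) ≤ (k:ℝ) := Nat.cast_nonneg k
    linarith
  have := lemA hb
  unfold Fj
  rw [integral_div, this]
  have h1 : (0:ℝ) < (k:ℝ) + 2/θ := by
    have : (0:ℝ) ≤ (k:ℝ) := Nat.cast_nonneg k; linarith
  have h2 : (0:ℝ) < (k:ℝ) + 1 + 2/θ := by linarith
  have h3 : (0:ℝ) < (k:ℝ) + 1 := by positivity
  have h4 : ((k:ℝ) + 2/θ - 1 + 1) = (k:ℝ) + 2/θ := by ring
  have h5 : ((k:ℝ) + 2/θ - 1 + 2) = (k:ℝ) + 1 + 2/θ := by ring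
  rw [h4, h5]
  field_simp [h1.ne', h2.ne', h3.ne']
  ring

lemma Fj_integrable (θ : ℝ) (hθ : 1 ≤ θ) (k : ℕ) :
    IntegrableOn (Fj θ k) (Ioo (0:ℝ) 1) := by
  have hθ0 : (0:ℝ) < θ := by linarith
  have hb : (-1:ℝ) < (k:ℝ) + 2/θ - 1 := by
    have : (0:ℝ) ≤ (k:ℝ) := Nat.cast_nonneg k
    have : (0:ℝ) < 2/θ := by positivity
    have h0 : (0:ℝ) ≤ (k:ℝ) := Nat.cast_nonneg k
    linarith
  set b : ℝ := (k:ℝ) + 2/θ - 1 with hbdef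
  have h1 : IntegrableOn (fun u : ℝ => u ^ b) (Ioo 0 1) := by
    have := (intervalIntegral.intervalIntegrable_rpow' (a := (0:ℝ)) (b := 1) hb)
    rw [intervalIntegrable_iff_integrableOn_Ioc_of_le (by norm_num)] at this
    exact this.mono_set Ioo_subset_Ioc_self
  have h2 : IntegrableOn (fun u : ℝ => u ^ (b+1)) (Ioo 0 1) := by
    have := (intervalIntegral.intervalIntegrable_rpow' (a := (0:ℝ)) (b := 1)
      (by linarith : (-1:ℝ) < b+1))
    rw [intervalIntegrable_iff_integrableOn_Ioc_of_le (by norm_num)] at this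
    exact this.mono_set Ioo_subset_Ioc_self
  have h3 : IntegrableOn (fun u : ℝ => (u ^ b - u ^ (b+1)) / ((k:ℝ)+1)) (Ioo 0 1) :=
    (h1.sub h2).div_const _
  apply h3.congr_fun ?_ measurableSet_Ioo
  intro u hu
  have hu0 : (0:ℝ) < u := hu.1
  unfold Fj
  show (u ^ b - u ^ (b+1)) / ((k:ℝ)+1) = u ^ ((k:ℝ) + 2/θ - 1) * (1 - u) / ((k:ℝ)+1)
  rw [Real.rpow_add hu0, Real.rpow_one, ← hbdef]
  ring

lemma Fj_hasSum (θ : ℝ) (hθ : 1 ≤ θ) {u : ℝ} (hu : u ∈ Ioo (0:ℝ) 1) :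
    HasSum (fun k : ℕ => Fj θ k u) (-Real.log (1-u) * (u ^ (2/θ - 2) * (1-u))) := by
  have hu0 : (0:ℝ) < u := hu.1
  have hs := Real.hasSum_pow_div_log_of_abs_lt_one
    (x := u) (by rw [abs_of_pos hu0]; exact hu.2)
  have hs' := hs.mul_right (u ^ (2/θ - 2) * (1-u))
  convert hs' using 2 with k
  · rfl
  unfold Fj
  have : (u:ℝ) ^ (k+1) = u ^ (((k:ℝ)+1)) := by
    rw [← Real.rpow_natCast u (k+1)]
    norm_num
  have e : u ^ ((k:ℝ) + 2/θ - 1) = u ^ (2/θ - 2) * u ^ ((k:ℝ)+1) := by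
    rw [← Real.rpow_add hu0]; ring_nf
  rw [this, e]
  ring

lemma sumBase : Summable (fun k : ℕ => 1/((k:ℝ)+1)^2) := by
  have h : Summable (fun n : ℕ => 1 / (n : ℝ) ^ 2) :=
    summable_one_div_nat_pow.mpr one_lt_two
  have := (summable_nat_add_iff (f := fun n : ℕ => 1 / (n : ℝ) ^ 2) 1).mpr h
  refine this.congr fun k => ?_
  push_cast
  ring

/-- Kendall's tau of the Joe copula:
`1 − 4 ∫_0^∞ t (ψ′(t))² dt = 1 − 4 ∑_{k=1}^∞ 1/(k(θk+2)(θ(k−1)+2))` for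
`ψ(t) = 1 − (1−e^{−t})^{1/θ}`, the series being convergent. -/
theorem stmt_18 (θ : ℝ) (hθ : 1 ≤ θ) :
    Summable (fun k : ℕ =>
      1 / (((k : ℝ) + 1) * (θ * ((k : ℝ) + 1) + 2) * (θ * (k : ℝ) + 2))) ∧
    1 - 4 * ∫ t in Set.Ioi (0:ℝ),
        t * (deriv (fun s => 1 - (1 - Real.exp (-s)) ^ (1/θ)) t) ^ 2
      = 1 - 4 * ∑' k : ℕ,
          1 / (((k : ℝ) + 1) * (θ * ((k : ℝ) + 1) + 2) * (θ * (k : ℝ) + 2)) := by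
  have hθ0 : (0:ℝ) < θ := by linarith
  have hc : (0:ℝ) < 2/θ := by positivity
  -- positivity facts
  have hk1 : ∀ k : ℕ, (0:ℝ) < (k:ℝ) + 1 := fun k => by positivity
  have hk2 : ∀ k : ℕ, (0:ℝ) < (k:ℝ) + 2/θ := fun k => by positivity
  have hk3 : ∀ k : ℕ, (0:ℝ) < (k:ℝ) + 1 + 2/θ := fun k => by positivity
  have hk4 : ∀ k : ℕ, (0:ℝ) < θ * ((k:ℝ)+1) + 2 := fun k => by positivity
  have hk5 : ∀ k : ℕ, (0:ℝ) < θ * (k:ℝ) + 2 := fun k => by positivity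
  have hsum : Summable (fun k : ℕ =>
      1 / (((k : ℝ) + 1) * (θ * ((k : ℝ) + 1) + 2) * (θ * (k : ℝ) + 2))) := by
    apply Summable.of_nonneg_of_le (fun k => by positivity) _ sumBase
    intro k
    apply one_div_le_one_div_of_le (by positivity)
    have h1 : (k:ℝ) + 1 ≤ θ * ((k:ℝ)+1) + 2 := by nlinarith [hk1 k]
    have h2 : (1:ℝ) ≤ θ * (k:ℝ) + 2 := by nlinarith [Nat.cast_nonneg (α := ℝ) k]
    calc ((k:ℝ)+1)^2 = ((k:ℝ)+1) * ((k:ℝ)+1) * 1 := by ring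
      _ ≤ ((k:ℝ)+1) * (θ * ((k:ℝ)+1) + 2) * (θ * (k:ℝ) + 2) := by
          apply mul_le_mul _ h2 (by norm_num) (by positivity)
          exact mul_le_mul_of_nonneg_left h1 (hk1 k).le
  refine ⟨hsum, ?_⟩
  have hV : Summable (fun k : ℕ =>
      1 / (((k:ℝ)+1) * ((k:ℝ) + 2/θ) * ((k:ℝ) + 1 + 2/θ))) := by
    apply Summable.of_nonneg_of_le (fun k => by positivity) _ (sumBase.mul_left (θ/2))
    intro k
    have knn : (0:ℝ) ≤ (k:ℝ) := Nat.cast_nonneg k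
    have hle : (2/θ) * ((k:ℝ)+1)^2 ≤ ((k:ℝ)+1)*((k:ℝ)+2/θ)*((k:ℝ)+1+2/θ) := by
      nlinarith [mul_nonneg knn hc.le, mul_nonneg (mul_nonneg knn knn) hc.le,
        mul_nonneg hc.le hc.le, mul_nonneg knn (mul_nonneg hc.le hc.le),
        mul_nonneg (mul_nonneg knn knn) knn]
    calc 1 / (((k:ℝ)+1) * ((k:ℝ) + 2/θ) * ((k:ℝ) + 1 + 2/θ))
        ≤ 1 / ((2/θ) * ((k:ℝ)+1)^2) := one_div_le_one_div_of_le (by positivity) hle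
      _ = θ/2 * (1/((k:ℝ)+1)^2) := by
          field_simp
  set g : ℝ → ℝ := fun u => (1/θ^2) * (-Real.log (1-u) * (u ^ (2/θ - 2) * (1-u))) with hg
  have step1 : ∫ t in Ioi (0:ℝ),
        t * (deriv (fun s => 1 - (1 - Real.exp (-s)) ^ (1/θ)) t) ^ 2
      = ∫ t in Ioi (0:ℝ), Real.exp (-t) * g (1 - Real.exp (-t)) := by
    apply setIntegral_congr_fun measurableSet_Ioi
    intro t ht
    have ht0 : (0:ℝ) < t := ht
    have hx : (0:ℝ) < 1 - Real.exp (-t) := by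
      have : Real.exp (-t) < 1 := Real.exp_lt_one_iff.mpr (by linarith)
      linarith
    simp only
    rw [lemC θ hθ ht0]
    simp only [hg]
    have hsq : ((1 - Real.exp (-t)) ^ (1/θ - 1)) * ((1 - Real.exp (-t)) ^ (1/θ - 1))
        = (1 - Real.exp (-t)) ^ (2/θ - 2) := by
      rw [← Real.rpow_add hx]; ring_nf
    have e2 : (1:ℝ) - (1 - Real.exp (-t)) = Real.exp (-t) := by ring
    rw [show (-(1/θ * (1 - Real.exp (-t)) ^ (1/θ - 1) * Real.exp (-t)))^2
        = (1/θ^2) * (((1 - Real.exp (-t)) ^ (1/θ - 1)) * ((1 - Real.exp (-t)) ^ (1/θ - 1)))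
          * (Real.exp (-t) * Real.exp (-t)) from by ring,
      hsq, e2, Real.log_exp, neg_neg]
    ring
  have step3 : ∫ u in Ioo (0:ℝ) 1, g u
      = ∫ u in Ioo (0:ℝ) 1, (1/θ^2) * ∑' k : ℕ, Fj θ k u := by
    apply setIntegral_congr_fun measurableSet_Ioo
    intro u hu
    simp only [hg]
    rw [(Fj_hasSum θ hθ hu).tsum_eq]
  have hInt : ∀ k : ℕ, Integrable (Fj θ k) (volume.restrict (Ioo (0:ℝ) 1)) :=
    fun k => Fj_integrable θ hθ k
  have hnormeq : ∀ k : ℕ, (∫ u in Ioo (0:ℝ) 1, ‖Fj θ k u‖)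
      = 1 / (((k:ℝ)+1) * ((k:ℝ) + 2/θ) * ((k:ℝ) + 1 + 2/θ)) := by
    intro k
    rw [← lemE θ hθ k]
    apply setIntegral_congr_fun measurableSet_Ioo
    intro u hu
    have h0 : 0 ≤ Fj θ k u := by
      unfold Fj
      have h1 := hu.1; have h2 := hu.2
      have : (0:ℝ) ≤ 1 - u := by linarith
      positivity
    simp [Real.norm_eq_abs, abs_of_nonneg h0]
  have hNorm : Summable (fun k : ℕ => ∫ u in Ioo (0:ℝ) 1, ‖Fj θ k u‖) :=
    hV.congr fun k => (hnormeq k).symm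
  have step5 : ∫ u in Ioo (0:ℝ) 1, ∑' k : ℕ, Fj θ k u
      = ∑' k : ℕ, ∫ u in Ioo (0:ℝ) 1, Fj θ k u :=
    (integral_tsum_of_summable_integral_norm hInt hNorm).symm
  have key : ∫ t in Ioi (0:ℝ),
        t * (deriv (fun s => 1 - (1 - Real.exp (-s)) ^ (1/θ)) t) ^ 2
      = ∑' k : ℕ, 1 / (((k : ℝ) + 1) * (θ * ((k : ℝ) + 1) + 2) * (θ * (k : ℝ) + 2)) := by
    rw [step1, ← lemB g, step3, integral_const_mul, step5]
    rw [← tsum_mul_left]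
    apply tsum_congr
    intro k
    rw [lemE θ hθ k]
    have n1 := (hk1 k).ne'
    have n2 := (hk2 k).ne'
    have n3 := (hk3 k).ne'
    have n4 := (hk4 k).ne'
    have n5 := (hk5 k).ne'
    field_simp
  rw [key]
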